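/- arXiv:1710.08094 — 5 statements merged into one kernel-verified Lean document; each statement's English description precedes it below -/
import Mathlib

section
/- Let A be a finite group, S a normal subgroup of A whose index [A : S] is a power of 2, Q a Sylow 2-subgroup of A, and P = S ∩ Q. Suppose that N_S(P) is the internal direct product of P with a subgroup V of S of odd order; that is, V has odd order, every element of V commutes with every element of P, P ∩ V = {1}, and N_S(P) = P·V. Then N_A(Q) is the internal direct product of Q and C_V(Q) := V ∩ C_A(Q): every element of V ∩ C_A(Q) commutes with every element of Q, Q ∩ (V ∩ C_A(Q)) = {1}, and N_A(Q) = Q·(V ∩ C_A(Q)). -/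
open scoped Pointwise

private lemma conj_pow_aux {A : Type*} [Group A] {v q c : A} (h1 : v * q * v⁻¹ = q * c)
    (h2 : Commute v c) : ∀ n : ℕ, v ^ n * q * (v ^ n)⁻¹ = q * c ^ n := by
  intro n
  induction n with
  | zero => simp
  | succ n ih =>
    have hcn : v * c ^ n * v⁻¹ = c ^ n := by
      rw [(h2.pow_right n).eq, mul_assoc, mul_inv_cancel, mul_one]
    calc v ^ (n + 1) * q * (v ^ (n + 1))⁻¹
        = v * (v ^ n * q * (v ^ n)⁻¹) * v⁻¹ := by
          rw [pow_succ']
          group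
      _ = v * (q * c ^ n) * v⁻¹ := by rw [ih]
      _ = (v * q * v⁻¹) * (v * c ^ n * v⁻¹) := by group
      _ = (q * c) * c ^ n := by rw [h1, hcn]
      _ = q * c ^ (n + 1) := by rw [mul_assoc, ← pow_succ']

/-- Let `A` be a finite group, `S` a normal subgroup of `2`-power index, `Q` a Sylow
`2`-subgroup of `A`, and `P = S ⊓ Q`. If `N_S(P) = P × V` with `V ≤ S` of odd order,
then `N_A(Q) = Q × C_V(Q)` where `C_V(Q) = V ⊓ C_A(Q)`. -/
theorem stmt3 {A : Type*} [Group A] [Fintype A] (S : Subgroup A) [S.Normal]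
    (hidx : ∃ k : ℕ, S.index = 2 ^ k) (Q : Sylow 2 A) (V : Subgroup A) (hVS : V ≤ S)
    (hVodd : Odd (Nat.card V))
    (hcomm : ∀ v ∈ V, ∀ p ∈ S ⊓ (Q : Subgroup A), Commute v p)
    (hPV : (S ⊓ (Q : Subgroup A)) ⊓ V = ⊥)
    (hNSP : ∀ x : A, x ∈ S ⊓ Subgroup.normalizer ((S ⊓ (Q : Subgroup A) : Subgroup A) : Set A) ↔
      ∃ p ∈ S ⊓ (Q : Subgroup A), ∃ v ∈ V, x = p * v) :
    (∀ w ∈ V ⊓ Subgroup.centralizer ((Q : Subgroup A) : Set A), ∀ q ∈ (Q : Subgroup A),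
        Commute w q) ∧
      (Q : Subgroup A) ⊓ (V ⊓ Subgroup.centralizer ((Q : Subgroup A) : Set A)) = ⊥ ∧
      (∀ x : A, x ∈ Subgroup.normalizer ((Q : Subgroup A) : Set A) ↔
        ∃ q ∈ (Q : Subgroup A),
          ∃ w ∈ V ⊓ Subgroup.centralizer ((Q : Subgroup A) : Set A), x = q * w) := by
  have hSnorm : S.Normal := inferInstance
  refine ⟨?_, ?_, ?_⟩
  · intro w hw q hq
    exact ((Subgroup.mem_centralizer_iff.mp hw.2) q hq).symm
  · rw [eq_bot_iff]
    rintro x ⟨hxQ, hxV, -⟩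
    have hx : x ∈ (S ⊓ (Q : Subgroup A)) ⊓ V := ⟨⟨hVS hxV, hxQ⟩, hxV⟩
    rw [hPV] at hx
    exact hx
  · -- S ⊔ Q = ⊤
    have htop : S ⊔ (Q : Subgroup A) = ⊤ := by
      obtain ⟨k, hk⟩ := hidx
      have h1 : (S ⊔ (Q : Subgroup A)).index ∣ 2 ^ k :=
        hk ▸ Subgroup.index_dvd_of_le le_sup_left
      have h2 : (S ⊔ (Q : Subgroup A)).index ∣ (Q : Subgroup A).index :=
        Subgroup.index_dvd_of_le le_sup_right
      have hodd : ¬ (2 ∣ (Q : Subgroup A).index) := Q.not_dvd_index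
      rcases (Nat.dvd_prime_pow Nat.prime_two).mp h1 with ⟨m, _, hval⟩
      rcases Nat.eq_zero_or_pos m with hm0 | hmpos
      · rw [hm0, pow_zero] at hval
        exact Subgroup.index_eq_one.mp hval
      · exact absurd (dvd_trans (hval ▸ dvd_pow_self 2 hmpos.ne') h2) hodd
    intro x
    constructor
    · intro hx
      -- decompose x = s * q
      have hxmem : x ∈ ((S : Set A) * ((Q : Subgroup A) : Set A)) := by
        rw [← Subgroup.normal_mul, htop]
        trivial
      obtain ⟨s, hs, q, hq, rfl⟩ := hxmem
      -- s normalizes Q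
      have hsN : s ∈ Subgroup.normalizer ((Q : Subgroup A) : Set A) := by
        have h := mul_mem hx (inv_mem (Subgroup.le_normalizer hq))
        simpa [mul_assoc] using h
      -- s normalizes P = S ⊓ Q
      have hsP : s ∈ Subgroup.normalizer ((S ⊓ (Q : Subgroup A) : Subgroup A) : Set A) := by
        rw [Subgroup.mem_normalizer_iff] at hsN ⊢
        intro h
        constructor
        · rintro ⟨hS, hQ⟩
          exact ⟨hSnorm.conj_mem h hS s, (hsN h).mp hQ⟩
        · rintro ⟨hS, hQ⟩
          refine ⟨?_, (hsN h).mpr hQ⟩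
          have := hSnorm.conj_mem _ hS s⁻¹
          simpa [mul_assoc] using this
      obtain ⟨p, hp, v, hv, hsv⟩ := (hNSP s).mp ⟨hs, hsP⟩
      subst hsv
      -- v normalizes Q
      have hvN : v ∈ Subgroup.normalizer ((Q : Subgroup A) : Set A) := by
        have h := mul_mem (inv_mem (Subgroup.le_normalizer hp.2)) hsN
        simpa [mul_assoc] using h
      -- v centralizes Q
      have hvC : v ∈ Subgroup.centralizer ((Q : Subgroup A) : Set A) := by
        rw [Subgroup.mem_centralizer_iff]
        intro q' hq'
        set c : A := q'⁻¹ * v * q' * v⁻¹ with hc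
        have hcQ : c ∈ (Q : Subgroup A) := by
          have hconj : v * q' * v⁻¹ ∈ (Q : Subgroup A) :=
            (Subgroup.mem_normalizer_iff.mp hvN q').mp hq'
          have : q'⁻¹ * (v * q' * v⁻¹) ∈ (Q : Subgroup A) := mul_mem (inv_mem hq') hconj
          simpa [hc, mul_assoc] using this
        have hcS : c ∈ S := by
          have h1 : q'⁻¹ * v * q' ∈ S := by
            have := hSnorm.conj_mem v (hVS hv) q'⁻¹
            simpa using this
          exact mul_mem h1 (inv_mem (hVS hv))
        have hvc : Commute v c := hcomm v hv c ⟨hcS, hcQ⟩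
        have h1 : v * q' * v⁻¹ = q' * c := by rw [hc]; group
        have key := conj_pow_aux h1 hvc (orderOf v)
        rw [pow_orderOf_eq_one, one_mul, inv_one, mul_one] at key
        have hcn : c ^ (orderOf v) = 1 := by
          have := key.symm
          rwa [mul_eq_left] at this
        -- orderOf v is odd
        have hnodd : Odd (orderOf v) := by
          have hdvd : orderOf v ∣ Nat.card V := Subgroup.orderOf_dvd_natCard V hv
          rcases Nat.even_or_odd (orderOf v) with he | ho
          · exfalso
            have h2 : (2 : ℕ) ∣ orderOf v := he.two_dvd
            have : (2 : ℕ) ∣ Nat.card V := h2.trans hdvd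
            rw [Nat.odd_iff] at hVodd
            omega
          · exact ho
        -- c lies in the 2-group Q
        obtain ⟨k, hk⟩ := Q.2 ⟨c, hcQ⟩
        have hck : c ^ (2 ^ k) = 1 := by
          have := congrArg (Subtype.val) hk
          simpa using this
        have hd1 : orderOf c ∣ 2 ^ k := orderOf_dvd_of_pow_eq_one hck
        have hd2 : orderOf c ∣ orderOf v := orderOf_dvd_of_pow_eq_one hcn
        have hcop : Nat.Coprime (2 ^ k) (orderOf v) :=
          Nat.Coprime.pow_left k (Nat.coprime_two_left.mpr hnodd)
        have : orderOf c ∣ 1 := hcop ▸ Nat.dvd_gcd hd1 hd2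
        have hc1 : c = 1 := orderOf_eq_one_iff.mp (Nat.dvd_one.mp this)
        have : v * q' * v⁻¹ = q' := by rw [h1, hc1, mul_one]
        calc q' * v = (v * q' * v⁻¹) * v := by rw [this]
          _ = v * q' := by group
      exact ⟨p * q, mul_mem hp.2 hq,  v, ⟨hv, hvC⟩, by
        have hcq : q * v = v * q := Subgroup.mem_centralizer_iff.mp hvC q hq
        show p * v * q = p * q * v
        rw [mul_assoc, mul_assoc, hcq]⟩
    · rintro ⟨q, hq, w, ⟨-, hwC⟩, rfl⟩
      have hwN : w ∈ Subgroup.normalizer ((Q : Subgroup A) : Set A) := by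
        rw [Subgroup.mem_normalizer_iff]
        intro h
        constructor
        · intro hh
          have : h * w = w * h := Subgroup.mem_centralizer_iff.mp hwC h hh
          have : w * h * w⁻¹ = h := by rw [← this]; group
          rwa [this]
        · intro hh
          have hcomm' : (w * h * w⁻¹) * w = w * (w * h * w⁻¹) :=
            Subgroup.mem_centralizer_iff.mp hwC _ hh
          have hl : w * h = w * (w * h * w⁻¹) := by rw [← hcomm']; group
          have heq : h = w * h * w⁻¹ := mul_left_cancel hl
          rw [heq]
          exact hh
      exact mul_mem (Subgroup.le_normalizer hq) hwN
end

section
/- Let A be a finite group, S a normal subgroup of A whose index [A : S] is a power of 2, Q a Sylow 2-subgroup of A, and P = S ∩ Q. Suppose that N_S(P) has a normal 2-complement centralizing P; that is, there is a subgroup V of S of odd order such that every element of V commutes with every element of P, P ∩ V = {1}, and N_S(P) = P·V. Then N_A(Q) has a normal 2-complement: there exists a normal subgroup W of N_A(Q) of odd order such that W·Q = N_A(Q) and W ∩ Q = {1}. -/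
open Subgroup

/-- Let `A` be a finite group, `S` a normal subgroup of `2`-power index, `Q` a Sylow
`2`-subgroup of `A`, and `P = S ⊓ Q`. If `N_S(P)` has a normal `2`-complement
centralizing `P`, i.e. `N_S(P) = P * V` with `V ≤ S` of odd order centralizing `P` and
`P ⊓ V = ⊥`, then `N_A(Q)` has a normal `2`-complement: a normal subgroup `W` of
`N_A(Q)` of odd order with `W * Q = N_A(Q)` and `W ⊓ Q = ⊥`. -/
theorem stmt4 {A : Type*} [Group A] [Fintype A] (S : Subgroup A) [S.Normal]
    (hidx : ∃ k : ℕ, S.index = 2 ^ k) (Q : Sylow 2 A) (V : Subgroup A) (hVS : V ≤ S)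
    (hVodd : Odd (Nat.card V))
    (hcomm : ∀ v ∈ V, ∀ p ∈ S ⊓ (Q : Subgroup A), Commute v p)
    (hPV : (S ⊓ (Q : Subgroup A)) ⊓ V = ⊥)
    (hNSP : ∀ x : A, x ∈ S ⊓ (Subgroup.normalizer ((S ⊓ (Q : Subgroup A) : Subgroup A) : Set A)) ↔
      ∃ p ∈ S ⊓ (Q : Subgroup A), ∃ v ∈ V, x = p * v) :
    ∃ W : Subgroup ↥(Subgroup.normalizer ((Q : Subgroup A) : Set A)), W.Normal ∧ Odd (Nat.card W) ∧
      (∀ x : ↥(Subgroup.normalizer ((Q : Subgroup A) : Set A)),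
        ∃ w ∈ W, ∃ q ∈ (Q : Subgroup A).subgroupOf (Subgroup.normalizer ((Q : Subgroup A) : Set A)),
          x = w * q) ∧
      W ⊓ (Q : Subgroup A).subgroupOf (Subgroup.normalizer ((Q : Subgroup A) : Set A)) = ⊥ := by
  classical
  -- A = S * Q
  have hsup : S ⊔ (Q : Subgroup A) = ⊤ := by
    obtain ⟨k, hk⟩ := hidx
    have h1 : (S ⊔ (Q:Subgroup A)).index ∣ (Q:Subgroup A).index :=
      Subgroup.index_dvd_of_le le_sup_right
    have h2' : (S ⊔ (Q:Subgroup A)).index ∣ S.index :=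
      Subgroup.index_dvd_of_le le_sup_left
    have hodd : ¬ (2 ∣ (Q:Subgroup A).index) := Q.not_dvd_index
    have hdvd : (S ⊔ (Q:Subgroup A)).index ∣ 2 ^ k := hk ▸ h2'
    have hnd : ¬ (2 ∣ (S ⊔ (Q:Subgroup A)).index) := fun h => hodd (h.trans h1)
    obtain ⟨j, hj, hje⟩ := (Nat.dvd_prime_pow Nat.prime_two).mp hdvd
    rw [← Subgroup.index_eq_one, hje]
    rcases Nat.eq_zero_or_pos j with rfl | hjp
    · simp
    · exact absurd (hje ▸ dvd_pow_self 2 hjp.ne') hnd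
  have Pdef : S ⊓ (Q : Subgroup A) = S ⊓ (Q : Subgroup A) := rfl
  -- odd order elements of V
  have hordV : ∀ v ∈ V, Odd (orderOf v) := by
    intro v hv
    have h1 : orderOf (⟨v, hv⟩ : V) ∣ Nat.card V := orderOf_dvd_natCard _
    have e : orderOf ((⟨v, hv⟩ : V) : A) = orderOf (⟨v, hv⟩ : V) := Subgroup.orderOf_coe _
    have h2 : orderOf v ∣ Nat.card V := e.symm ▸ h1
    have h2d : ¬ 2 ∣ Nat.card V := by rw [Nat.odd_iff] at hVodd; omega
    have h3 : ¬ 2 ∣ orderOf v := fun h => h2d (h.trans h2)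
    rw [Nat.odd_iff]; omega
  -- elements of V in N_A(Q) centralize Q
  have hVN : ∀ v ∈ V, v ∈ (Subgroup.normalizer ((Q:Subgroup A) : Set A)) → ∀ q ∈ (Q:Subgroup A), Commute v q := by
    intro v hv hvN q hq
    set c : A := q⁻¹ * (v * q * v⁻¹) with hc
    have hcQ : c ∈ (Q:Subgroup A) :=
      mul_mem (inv_mem hq) ((Subgroup.mem_normalizer_iff.mp hvN q).mp hq)
    have hcS : c ∈ S := by
      have h1 : q⁻¹ * v * q ∈ S := by
        have := ‹S.Normal›.conj_mem v (hVS hv) q⁻¹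
        simpa using this
      have h2 : (q⁻¹ * v * q) * v⁻¹ ∈ S := mul_mem h1 (inv_mem (hVS hv))
      have : c = (q⁻¹ * v * q) * v⁻¹ := by rw [hc]; group
      rwa [this]
    have hvc : Commute v c := hcomm v hv c ⟨hcS, hcQ⟩
    have key : ∀ n : ℕ, v^n * q * (v^n)⁻¹ = q * c^n := by
      intro n
      induction n with
      | zero => simp
      | succ n ih =>
        have e1 : v^(n+1) * q * (v^(n+1))⁻¹ = v * (v^n * q * (v^n)⁻¹) * v⁻¹ := by group
        rw [e1, ih]
        have e2 : v * c^n * v⁻¹ = c^n := by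
          rw [(hvc.pow_right n).eq]; group
        calc v * (q * c^n) * v⁻¹ = (v*q*v⁻¹) * (v*c^n*v⁻¹) := by group
          _ = (v*q*v⁻¹) * c^n := by rw [e2]
          _ = (q * c) * c^n := by rw [hc]; group
          _ = q * c^(n+1) := by rw [pow_succ]; group
    have hcn : c ^ orderOf v = 1 := by
      have h := key (orderOf v)
      rw [pow_orderOf_eq_one] at h
      simp only [one_mul, inv_one, mul_one] at h
      exact mul_left_cancel (h.symm.trans (mul_one q).symm)
    have hc1 : c = 1 := by
      obtain ⟨m, hm⟩ := Q.2 ⟨c, hcQ⟩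
      have hmc : c ^ (2:ℕ) ^ m = 1 := by
        have := congrArg (Subtype.val) hm
        simpa using this
      have d1 : orderOf c ∣ 2 ^ m := orderOf_dvd_of_pow_eq_one hmc
      have d2 : orderOf c ∣ orderOf v := orderOf_dvd_of_pow_eq_one hcn
      have hov := hordV v hv
      have hc2 : Nat.Coprime 2 (orderOf v) :=
        (Nat.Prime.coprime_iff_not_dvd Nat.prime_two).mpr (by rw [Nat.odd_iff] at hov; omega)
      have hcop : Nat.Coprime (orderOf v) (2 ^ m) := Nat.Coprime.pow_right m hc2.symm
      have : orderOf c ∣ 1 := by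
        have := Nat.dvd_gcd d2 d1
        rwa [Nat.Coprime.gcd_eq_one hcop] at this
      exact orderOf_eq_one_iff.mp (Nat.dvd_one.mp this)
    have : v * q * v⁻¹ = q := by
      have : q * c = v * q * v⁻¹ := by rw [hc]; group
      rw [hc1, mul_one] at this; exact this.symm
    have : v * q = q * v := by
      have h := this
      calc v * q = (v * q * v⁻¹) * v := by group
        _ = q * v := by rw [h]
    exact this
  -- N_A(Q) normalizes P = S ⊓ Q
  have hNleP : (Subgroup.normalizer ((Q:Subgroup A) : Set A)) ≤ (Subgroup.normalizer ((S ⊓ (Q:Subgroup A) : Subgroup A) : Set A)) := by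
    intro x hx
    rw [Subgroup.mem_normalizer_iff] at hx ⊢
    intro g
    constructor
    · rintro ⟨hgS, hgQ⟩
      exact ⟨‹S.Normal›.conj_mem g hgS x, (hx g).mp hgQ⟩
    · rintro ⟨hgS, hgQ⟩
      refine ⟨?_, (hx g).mpr hgQ⟩
      have := ‹S.Normal›.conj_mem _ hgS x⁻¹
      simpa [mul_assoc] using this
  -- decomposition of N_A(Q)
  have hdec : ∀ x ∈ (Subgroup.normalizer ((Q:Subgroup A) : Set A)),
      ∃ v, v ∈ V ∧ v ∈ (Subgroup.normalizer ((Q:Subgroup A) : Set A)) ∧ ∃ q ∈ (Q:Subgroup A), x = v * q := by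
    intro x hx
    have hxT : x ∈ (↑(S ⊔ (Q:Subgroup A)) : Set A) := by rw [hsup]; trivial
    rw [Subgroup.normal_mul] at hxT
    obtain ⟨s, hs, q, hq, hsq⟩ := Set.mem_mul.mp hxT
    have hqN : q ∈ (Subgroup.normalizer ((Q:Subgroup A) : Set A)) := Subgroup.le_normalizer hq
    have hsN : s ∈ (Subgroup.normalizer ((Q:Subgroup A) : Set A)) := by
      have : s = x * q⁻¹ := by rw [← hsq]; group
      rw [this]; exact mul_mem hx (inv_mem hqN)
    have hsP : s ∈ S ⊓ (Subgroup.normalizer ((S ⊓ (Q:Subgroup A) : Subgroup A) : Set A)) := ⟨hs, hNleP hsN⟩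
    obtain ⟨p, hp, w, hwV, hspw⟩ := (hNSP s).mp hsP
    have hpQ : p ∈ (Q:Subgroup A) := hp.2
    have hwN : w ∈ (Subgroup.normalizer ((Q:Subgroup A) : Set A)) := by
      have : w = p⁻¹ * s := by rw [hspw]; group
      rw [this]; exact mul_mem (inv_mem (Subgroup.le_normalizer hpQ)) hsN
    have hcwp : w * p = p * w := hVN w hwV hwN p hpQ
    refine ⟨w, hwV, hwN, p * q, mul_mem hpQ hq, ?_⟩
    rw [← hsq, hspw, ← hcwp]; group
  -- the normal 2-complement
  refine ⟨(V ⊓ (Subgroup.normalizer ((Q:Subgroup A) : Set A))).subgroupOf (Subgroup.normalizer ((Q:Subgroup A) : Set A)),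
    ?_, ?_, ?_, ?_⟩
  · refine ⟨fun w hw x => ?_⟩
    rw [Subgroup.mem_subgroupOf] at hw ⊢
    obtain ⟨hwV, hwN⟩ := hw
    obtain ⟨v, hvV, hvN, q, hq, hxq⟩ := hdec (x:A) x.2
    have hcwq : (w:A) * q = q * (w:A) := hVN w hwV hwN q hq
    have hcoe : ((x*w*x⁻¹ : (Subgroup.normalizer ((Q:Subgroup A) : Set A))) : A) = (x:A) * (w:A) * (x:A)⁻¹ := rfl
    have hval : (x:A) * (w:A) * (x:A)⁻¹ = v * (w:A) * v⁻¹ := by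
      rw [hxq]
      have e1 : q * (w:A) * q⁻¹ = (w:A) := by rw [← hcwq]; group
      calc v*q*(w:A)*(v*q)⁻¹ = v*(q*(w:A)*q⁻¹)*v⁻¹ := by group
        _ = v*(w:A)*v⁻¹ := by rw [e1]
    rw [Subgroup.mem_inf]
    refine ⟨?_, SetLike.coe_mem _⟩
    rw [hcoe, hval]
    exact mul_mem (mul_mem hvV hwV) (inv_mem hvV)
  · have hle : V ⊓ (Subgroup.normalizer ((Q:Subgroup A) : Set A)) ≤ (Subgroup.normalizer ((Q:Subgroup A) : Set A)) := inf_le_right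
    have e := Subgroup.subgroupOfEquivOfLe hle
    have hcard : Nat.card ((V ⊓ (Subgroup.normalizer ((Q:Subgroup A) : Set A))).subgroupOf (Subgroup.normalizer ((Q:Subgroup A) : Set A)))
        = Nat.card (V ⊓ (Subgroup.normalizer ((Q:Subgroup A) : Set A)) : Subgroup A) := Nat.card_congr e.toEquiv
    have hdvd : Nat.card (V ⊓ (Subgroup.normalizer ((Q:Subgroup A) : Set A)) : Subgroup A) ∣ Nat.card V :=
      Subgroup.card_dvd_of_le inf_le_left
    rw [hcard]
    rw [Nat.odd_iff] at hVodd ⊢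
    have h2 : ¬ 2 ∣ Nat.card (V ⊓ (Subgroup.normalizer ((Q:Subgroup A) : Set A)) : Subgroup A) :=
      fun h => by have := h.trans hdvd; omega
    have hpos : Nat.card (V ⊓ (Subgroup.normalizer ((Q:Subgroup A) : Set A)) : Subgroup A) ≠ 0 := Nat.card_pos.ne'
    omega
  · intro x
    obtain ⟨v, hvV, hvN, q, hq, hxq⟩ := hdec (x:A) x.2
    refine ⟨⟨v, hvN⟩, Subgroup.mem_subgroupOf.mpr ⟨hvV, hvN⟩,
      ⟨q, Subgroup.le_normalizer hq⟩, Subgroup.mem_subgroupOf.mpr hq, ?_⟩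
    exact Subtype.ext hxq
  · rw [eq_bot_iff]
    intro w hw
    rw [Subgroup.mem_inf] at hw
    obtain ⟨hw1, hw2⟩ := hw
    rw [Subgroup.mem_subgroupOf] at hw1 hw2
    rw [Subgroup.mem_inf] at hw1
    have hmem : (w:A) ∈ (S ⊓ (Q:Subgroup A)) ⊓ V := ⟨⟨hVS hw1.1, hw2⟩, hw1.1⟩
    rw [hPV, Subgroup.mem_bot] at hmem
    rw [Subgroup.mem_bot]
    exact Subtype.ext hmem
end

section
/- Let A be a finite group, S a normal subgroup of A whose index [A : S] is a power of 2, Q a Sylow 2-subgroup of A, and P = S ∩ Q. If the Sylow 2-subgroup P of S is self-normalizing in S, i.e. N_S(P) = P, then Q is self-normalizing in A, i.e. N_A(Q) = Q. -/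
/-- Let `A` be a finite group, `S` a normal subgroup of `2`-power index, `Q` a Sylow
`2`-subgroup of `A`, and `P = S ⊓ Q`. If `N_S(P) = P`, then `N_A(Q) = Q`. -/
theorem stmt5 {A : Type*} [Group A] [Fintype A] (S : Subgroup A) [S.Normal]
    (hidx : ∃ k : ℕ, S.index = 2 ^ k) (Q : Sylow 2 A)
    (hself : S ⊓ Subgroup.normalizer ((S ⊓ (Q : Subgroup A) : Subgroup A) : Set A) = S ⊓ (Q : Subgroup A)) :
    Subgroup.normalizer ((Q : Subgroup A) : Set A) = (Q : Subgroup A) := by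
  obtain ⟨k, hk⟩ := hidx
  refine le_antisymm ?_ Subgroup.le_normalizer
  intro x hx
  -- x normalizes P = S ⊓ Q
  have hxP : x ∈ Subgroup.normalizer ((S ⊓ (Q : Subgroup A) : Subgroup A) : Set A) := by
    rw [Subgroup.mem_normalizer_iff] at hx ⊢
    intro g
    simp only [Subgroup.mem_inf]
    constructor
    · rintro ⟨hgS, hgQ⟩
      exact ⟨Subgroup.Normal.conj_mem ‹S.Normal› g hgS x, (hx g).mp hgQ⟩
    · rintro ⟨hgS, hgQ⟩
      refine ⟨?_, (hx g).mpr hgQ⟩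
      have := Subgroup.Normal.conj_mem ‹S.Normal› _ hgS x⁻¹
      simpa [mul_assoc] using this
  -- x^(2^k) ∈ S, and it normalizes P, so it's in N_S(P) = P ≤ Q
  have hxkS : x ^ (2 ^ k) ∈ S := by
    have := S.pow_index_mem x
    rwa [hk] at this
  have hxkQ : x ^ (2 ^ k) ∈ (Q : Subgroup A) := by
    have hmem : x ^ (2 ^ k) ∈ S ⊓ Subgroup.normalizer ((S ⊓ (Q : Subgroup A) : Subgroup A) : Set A) :=
      ⟨hxkS, pow_mem hxP _⟩
    rw [hself] at hmem
    exact hmem.2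
  -- hence x has 2-power order
  obtain ⟨n, hn⟩ := Q.2 ⟨x ^ (2 ^ k), hxkQ⟩
  have hpow : x ^ (2 ^ (k + n)) = 1 := by
    have := congrArg (Subtype.val) hn
    simpa [pow_add, pow_mul] using this
  have hdvd : orderOf x ∣ 2 ^ (k + n) := orderOf_dvd_of_pow_eq_one hpow
  obtain ⟨m, _, hm⟩ := (Nat.dvd_prime_pow Nat.prime_two).mp hdvd
  have hX : IsPGroup 2 (Subgroup.zpowers x) :=
    IsPGroup.of_card (by rw [Nat.card_zpowers, hm])
  have hsup : IsPGroup 2 ((Subgroup.zpowers x ⊔ (Q : Subgroup A)) : Subgroup A) :=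
    IsPGroup.to_sup_of_normal_right' hX Q.2 (by
      rw [Subgroup.zpowers_le]; exact hx)
  have heq : Subgroup.zpowers x ⊔ (Q : Subgroup A) = (Q : Subgroup A) :=
    Q.3 hsup le_sup_right
  have : x ∈ Subgroup.zpowers x ⊔ (Q : Subgroup A) :=
    Subgroup.mem_sup_left (Subgroup.mem_zpowers x)
  rwa [heq] at this
end

section
/- Let A be a finite group, S a normal subgroup of A whose index [A : S] is a power of 2, Q a Sylow 2-subgroup of A, and P = S ∩ Q. Assume that C_S(P) = Z(P), i.e. the centralizer of P in S consists exactly of the elements of the center of P, and that N_S(P) = P ⋊ V for some subgroup V of S of odd order (so P ∩ V = {1} and N_S(P) = P·V). If V' is a normal subgroup of N_A(Q) of odd order with N_A(Q) = Q·V', then V' = {1}; in particular, either N_A(Q) = Q or N_A(Q) has no normal 2-complement. -/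
private lemma odd_dvd_two_pow {n k : ℕ} (hodd : Odd n) (hdvd : n ∣ 2 ^ k) : n = 1 :=
  Nat.eq_one_of_dvd_coprimes (Nat.Coprime.pow_right k hodd.coprime_two_right) dvd_rfl hdvd

private lemma aux6 {A : Type*} [Group A] [Fintype A] (S : Subgroup A) [S.Normal]
    (hidx : ∃ k : ℕ, S.index = 2 ^ k) (Q : Sylow 2 A)
    (hcent : S ⊓ Subgroup.centralizer ((S ⊓ (Q : Subgroup A) : Subgroup A) : Set A) =
      (S ⊓ (Q : Subgroup A)) ⊓
        Subgroup.centralizer ((S ⊓ (Q : Subgroup A) : Subgroup A) : Set A))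
    (W : Subgroup ↥(Subgroup.normalizer ((Q : Subgroup A) : Set A))) (hWn : W.Normal) (hWodd : Odd (Nat.card W)) :
    W = ⊥ := by
  obtain ⟨k, hk⟩ := hidx
  -- every element of W has odd order (as an element of the normalizer)
  have hordW : ∀ x ∈ W, Odd (orderOf x) := by
    intro x hx
    have h1 : orderOf (⟨x, hx⟩ : W) ∣ Nat.card W := orderOf_dvd_natCard _
    rw [Subgroup.orderOf_mk] at h1
    rcases Nat.even_or_odd (orderOf x) with he | ho
    · exfalso
      obtain ⟨m, hm⟩ := hWodd
      have : (2 : ℕ) ∣ Nat.card W := dvd_trans he.two_dvd h1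
      omega
    · exact ho
  -- elements of Q, as elements of the normalizer, have 2-power order
  have hordQ : ∀ g : A, g ∈ (Q : Subgroup A) → ∃ m : ℕ, orderOf g ∣ 2 ^ m := by
    intro g hg
    obtain ⟨m, hm⟩ := Q.2 ⟨g, hg⟩
    refine ⟨m, orderOf_dvd_of_pow_eq_one ?_⟩
    have := congrArg (Subtype.val) hm
    simpa using this
  rw [Subgroup.eq_bot_iff_forall]
  intro x hx
  set a : A := (x : A) with ha
  have hax : orderOf a = orderOf x := Subgroup.orderOf_coe x
  -- Step A : a ∈ S
  have haS : a ∈ S := by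
    rw [← QuotientGroup.eq_one_iff]
    rw [← orderOf_eq_one_iff]
    apply odd_dvd_two_pow (n := orderOf ((a : A ⧸ S)))
    · rcases Nat.even_or_odd (orderOf ((a : A ⧸ S))) with he | ho
      · exfalso
        have hdvd : orderOf ((a : A ⧸ S)) ∣ orderOf a :=
          orderOf_map_dvd (QuotientGroup.mk' S) a
        rw [hax] at hdvd
        obtain ⟨m, hm⟩ := hordW x hx
        have : (2:ℕ) ∣ orderOf x := dvd_trans he.two_dvd hdvd
        omega
      · exact ho
    · rw [← hk]
      have : orderOf ((a : A ⧸ S)) ∣ Nat.card (A ⧸ S) := orderOf_dvd_natCard _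
      rwa [← Subgroup.index] at this
  -- Step B : a centralizes Q
  have hcentQ : ∀ g ∈ (Q : Subgroup A), g * a = a * g := by
    intro g hg
    have hgN : g ∈ (Subgroup.normalizer ((Q : Subgroup A) : Set A)) := Subgroup.le_normalizer hg
    set q : ↥(Subgroup.normalizer ((Q : Subgroup A) : Set A)) := ⟨g, hgN⟩ with hq
    -- commutator c = q * x * q⁻¹ * x⁻¹ lies in W ∩ Q.subgroupOf N
    set c : ↥(Subgroup.normalizer ((Q : Subgroup A) : Set A)) := q * x * q⁻¹ * x⁻¹ with hc
    have hcW : c ∈ W := by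
      have h1 : q * x * q⁻¹ ∈ W := hWn.conj_mem x hx q
      exact W.mul_mem h1 (W.inv_mem hx)
    have hcQ : c ∈ (Q : Subgroup A).subgroupOf (Subgroup.normalizer ((Q : Subgroup A) : Set A)) := by
      have hqQ : q ∈ (Q : Subgroup A).subgroupOf (Subgroup.normalizer ((Q : Subgroup A) : Set A)) := hg
      have h2 : x * q⁻¹ * x⁻¹ ∈ (Q : Subgroup A).subgroupOf (Subgroup.normalizer ((Q : Subgroup A) : Set A)) := by
        have := (Subgroup.normal_in_normalizer (H := (Q : Subgroup A))).conj_mem q⁻¹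
          (Subgroup.inv_mem _ hqQ) x
        simpa [mul_assoc] using this
      have := Subgroup.mul_mem _ hqQ h2
      simpa [hc, mul_assoc] using this
    have hc1 : c = 1 := by
      rw [← orderOf_eq_one_iff]
      obtain ⟨m, hm⟩ := hordQ (c : A) hcQ
      rw [Subgroup.orderOf_coe] at hm
      exact odd_dvd_two_pow (hordW c hcW) hm
    have : q * x = x * q := by
      have := congrArg (· * x * q) hc1
      simpa [hc, mul_assoc] using this
    have := congrArg (Subtype.val) this
    simpa [hq, ha] using this
  -- conclude a ∈ P = S ⊓ Q
  have haP : a ∈ S ⊓ (Q : Subgroup A) := by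
    have h1 : a ∈ S ⊓ Subgroup.centralizer ((S ⊓ (Q : Subgroup A) : Subgroup A) : Set A) := by
      refine ⟨haS, Subgroup.mem_centralizer_iff.mpr ?_⟩
      intro g hg
      exact hcentQ g hg.2
    rw [hcent] at h1
    exact h1.1
  -- a has 2-power order and odd order, so a = 1
  have hx1 : x = 1 := by
    have : a = 1 := by
      rw [← orderOf_eq_one_iff]
      obtain ⟨m, hm⟩ := hordQ a haP.2
      rw [hax] at hm
      rw [hax]
      exact odd_dvd_two_pow (hordW x hx) hm
    exact Subtype.ext this
  exact hx1


/-- Let `A` be a finite group, `S` a normal subgroup of `2`-power index, `Q` a Sylow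
`2`-subgroup of `A`, and `P = S ⊓ Q`. Assume `C_S(P) = Z(P)` and `N_S(P) = P ⋊ V` with
`V ≤ S` of odd order. If `V'` is a normal subgroup of `N_A(Q)` of odd order with
`N_A(Q) = Q * V'`, then `V' = ⊥`; in particular either `N_A(Q) = Q` or `N_A(Q)` has no
normal `2`-complement. -/
theorem stmt6 {A : Type*} [Group A] [Fintype A] (S : Subgroup A) [S.Normal]
    (hidx : ∃ k : ℕ, S.index = 2 ^ k) (Q : Sylow 2 A) (V : Subgroup A) (hVS : V ≤ S)
    (hVodd : Odd (Nat.card V))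
    (hcent : S ⊓ Subgroup.centralizer ((S ⊓ (Q : Subgroup A) : Subgroup A) : Set A) =
      (S ⊓ (Q : Subgroup A)) ⊓
        Subgroup.centralizer ((S ⊓ (Q : Subgroup A) : Subgroup A) : Set A))
    (hPV : (S ⊓ (Q : Subgroup A)) ⊓ V = ⊥)
    (hNSP : ∀ x : A, x ∈ S ⊓ Subgroup.normalizer ((S ⊓ (Q : Subgroup A) : Subgroup A) : Set A) ↔
      ∃ p ∈ S ⊓ (Q : Subgroup A), ∃ v ∈ V, x = p * v) :
    (∀ V' : Subgroup ↥(Subgroup.normalizer ((Q : Subgroup A) : Set A)), V'.Normal → Odd (Nat.card V') →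
      (∀ x : ↥(Subgroup.normalizer ((Q : Subgroup A) : Set A)),
        ∃ q ∈ (Q : Subgroup A).subgroupOf (Subgroup.normalizer ((Q : Subgroup A) : Set A)),
          ∃ v ∈ V', x = q * v) →
      V' = ⊥) ∧
    (Subgroup.normalizer ((Q : Subgroup A) : Set A) = (Q : Subgroup A) ∨
      ¬ ∃ W : Subgroup ↥(Subgroup.normalizer ((Q : Subgroup A) : Set A)), W.Normal ∧ Odd (Nat.card W) ∧
          ∃ k : ℕ, W.index = 2 ^ k) := by
  constructor
  · intro V' hn hodd _
    exact aux6 S hidx Q hcent V' hn hodd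
  · by_cases hQ : (Subgroup.normalizer ((Q : Subgroup A) : Set A)) = (Q : Subgroup A)
    · exact Or.inl hQ
    · refine Or.inr ?_
      rintro ⟨W, hWn, hWodd, k, hk⟩
      have hWbot : W = ⊥ := aux6 S hidx Q hcent W hWn hWodd
      subst hWbot
      rw [Subgroup.index_bot] at hk
      have hN2 : IsPGroup 2 ↥(Subgroup.normalizer ((Q : Subgroup A) : Set A)) := IsPGroup.of_card hk
      exact hQ (Q.3 (IsPGroup.of_equiv hN2 (MulEquiv.refl _)) Subgroup.le_normalizer)
end

section
/- Let G be a finite group and N a normal subgroup of G whose index [G : N] is a power of 2. If χ is the character of an irreducible complex representation of G whose degree χ(1) is odd, then the restriction of χ to N is again the character of an irreducible complex representation of N, of the same degree. Equivalently: the restriction to N of any irreducible complex representation of G of odd dimension is irreducible. -/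
section Bridge

variable {H : Type*} [Group H] {V : Type*} [AddCommGroup V] [Module ℂ V]

private theorem aux_asAlgebraHom_mem (ρ : Representation ℂ H V)
    (W : Submodule ℂ V) (hW : ∀ h : H, ∀ w ∈ W, ρ h w ∈ W)
    (r : MonoidAlgebra ℂ H) {x : V} (hx : x ∈ W) : ρ.asAlgebraHom r x ∈ W := by
  induction r using MonoidAlgebra.induction_linear with
  | zero => simpa using W.zero_mem
  | add a b ha hb => simpa [map_add] using W.add_mem ha hb
  | single g c =>
      simpa [Representation.asAlgebraHom_single] using W.smul_mem c (hW g x hx)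

private theorem aux_algebraMap_smul (ρ : Representation ℂ H V) (c : ℂ) (x : ρ.asModule) :
    (algebraMap ℂ (MonoidAlgebra ℂ H) c) • x = (c • x : V) := by
  show ρ.asAlgebraHom (algebraMap ℂ (MonoidAlgebra ℂ H) c) x = c • x
  rw [AlgHom.commutes]
  rfl

private theorem aux_of_smul (ρ : Representation ℂ H V) (g : H) (x : ρ.asModule) :
    (MonoidAlgebra.of ℂ H g) • x = ρ g x := by
  show ρ.asAlgebraHom (MonoidAlgebra.of ℂ H g) x = ρ g x
  rw [Representation.asAlgebraHom_of]

private theorem aux_simple_iff (ρ : Representation ℂ H V) :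
    IsSimpleModule (MonoidAlgebra ℂ H) ρ.asModule ↔
      (Nontrivial V ∧
        ∀ W : Submodule ℂ V, (∀ h : H, ∀ w ∈ W, ρ h w ∈ W) → W = ⊥ ∨ W = ⊤) := by
  constructor
  · intro hs
    have hnt : Nontrivial ρ.asModule := IsSimpleModule.nontrivial (MonoidAlgebra ℂ H) _
    refine ⟨hnt, fun W hW => ?_⟩
    let P : Submodule (MonoidAlgebra ℂ H) ρ.asModule :=
      { carrier := (W : Set V)
        add_mem' := fun ha hb => W.add_mem ha hb
        zero_mem' := W.zero_mem
        smul_mem' := fun r x hx => by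
          show ρ.asAlgebraHom r x ∈ W
          exact aux_asAlgebraHom_mem ρ W hW r hx }
    rcases hs.eq_bot_or_eq_top P with h | h
    · left; ext x
      simp only [Submodule.mem_bot]
      constructor
      · intro hx
        have hx' : x ∈ P := hx
        rw [h] at hx'
        exact (Submodule.mem_bot (R := MonoidAlgebra ℂ H) (M := ρ.asModule) (x := x)).mp hx'
      · rintro rfl; exact W.zero_mem
    · right; ext x
      simp only [Submodule.mem_top, iff_true]
      have hx' : x ∈ P := by rw [h]; trivial
      exact hx'
  · rintro ⟨hnt, hW⟩
    haveI : Nontrivial ρ.asModule := hnt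
    refine { eq_bot_or_eq_top := fun P => ?_ }
    let Wc : Submodule ℂ V :=
      { carrier := (P : Set ρ.asModule)
        add_mem' := fun ha hb => P.add_mem ha hb
        zero_mem' := P.zero_mem
        smul_mem' := fun c x hx => by
          have h1 : (algebraMap ℂ (MonoidAlgebra ℂ H) c) • (show ρ.asModule from x) ∈ P :=
            P.smul_mem _ hx
          rwa [aux_algebraMap_smul] at h1 }
    have hinv : ∀ h : H, ∀ w ∈ Wc, ρ h w ∈ Wc := fun h w hw => by
      have h1 : (MonoidAlgebra.of ℂ H h) • (show ρ.asModule from w) ∈ P := P.smul_mem _ hw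
      rwa [aux_of_smul] at h1
    rcases hW Wc hinv with h | h
    · left; ext x
      simp only [Submodule.mem_bot]
      constructor
      · intro hx
        have hx' : x ∈ Wc := hx
        rw [h] at hx'
        exact (Submodule.mem_bot (R := ℂ) (M := V) (x := x)).mp hx'
      · rintro rfl; exact P.zero_mem
    · right; ext x
      simp only [Submodule.mem_top, iff_true]
      have hx' : x ∈ Wc := by rw [h]; trivial
      exact hx'

end Bridge

section Step2

variable {G : Type*} [Group G] {V : Type*} [AddCommGroup V] [Module ℂ V]

private theorem aux_comp (ρ : Representation ℂ G V) (a b : G) (v : V) :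
    ρ a (ρ b v) = ρ (a * b) v := by
  rw [map_mul]; rfl

/-- Index-two Clifford step: restriction of an odd-dimensional irreducible to an
index-two subgroup is irreducible. -/
private theorem aux_step2 [FiniteDimensional ℂ V] (ρ : Representation ℂ G V)
    (M : Subgroup G) (hM : M.index = 2)
    (hnt : Nontrivial V)
    (hirr : ∀ W : Submodule ℂ V, (∀ h : G, ∀ w ∈ W, ρ h w ∈ W) → W = ⊥ ∨ W = ⊤)
    (hodd : Odd (Module.finrank ℂ V)) :
    ∀ W : Submodule ℂ V, (∀ m ∈ M, ∀ w ∈ W, ρ m w ∈ W) → W = ⊥ ∨ W = ⊤ := by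
  classical
  set P : Submodule ℂ V → Prop :=
    fun U => U ≠ ⊥ ∧ ∀ m ∈ M, ∀ w ∈ U, ρ m w ∈ U with hPdef
  have htop : P ⊤ := ⟨fun h => by
      rcases exists_ne (0 : V) with ⟨v, hv⟩
      exact hv (by simpa using (h ▸ Submodule.mem_top : v ∈ (⊥ : Submodule ℂ V))),
    fun _ _ _ _ => trivial⟩
  have hne : {n | ∃ U, P U ∧ Module.finrank ℂ U = n}.Nonempty := ⟨_, ⊤, htop, rfl⟩
  obtain ⟨U₀, hU₀, hU₀rank⟩ := Nat.sInf_mem hne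
  have hmin : ∀ U, P U → Module.finrank ℂ U₀ ≤ Module.finrank ℂ U := fun U hU => by
    rw [hU₀rank]; exact Nat.sInf_le ⟨U, hU, rfl⟩
  -- find g ∉ M
  have hMne : M ≠ ⊤ := fun h => by simp [h, Subgroup.index_top] at hM
  obtain ⟨g, hg⟩ : ∃ g, g ∉ M := by
    by_contra h
    push_neg at h
    exact hMne (Subgroup.ext fun x => ⟨fun _ => trivial, fun _ => h x⟩)
  have key : ∀ a b : G, a * b ∈ M ↔ (a ∈ M ↔ b ∈ M) := fun a b =>
    Subgroup.mul_mem_iff_of_index_two hM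
  have hginv : g⁻¹ ∉ M := fun h => hg ((Subgroup.inv_mem_iff M).mp h)
  -- the conjugate submodule
  set W' : Submodule ℂ V := U₀.map (ρ g : V →ₗ[ℂ] V) with hW'def
  have hW'inv : ∀ m ∈ M, ∀ v ∈ W', ρ m v ∈ W' := by
    rintro m hm v ⟨w, hw, rfl⟩
    have hgm : g⁻¹ * m ∉ M := fun h => by
      have : g⁻¹ * m * m⁻¹ ∈ M := M.mul_mem h (M.inv_mem hm)
      simpa using hginv (by simpa using this)
    have h1 : g⁻¹ * m * g ∈ M := by
      rw [key]
      constructor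
      · intro h; exact absurd h hgm
      · intro h; exact absurd h hg
    refine ⟨ρ (g⁻¹ * m * g) w, hU₀.2 _ h1 w hw, ?_⟩
    rw [aux_comp, aux_comp]
    congr 1
    group
  have hrank' : Module.finrank ℂ W' = Module.finrank ℂ U₀ := by
    let e : V ≃ₗ[ℂ] V := LinearEquiv.ofLinear (ρ g) (ρ g⁻¹)
      (by ext v; simp [aux_comp]) (by ext v; simp [aux_comp])
    exact LinearEquiv.finrank_map_eq e U₀
  -- the sup is G-invariant hence ⊤
  have hsupinv : ∀ h : G, ∀ w ∈ U₀ ⊔ W', ρ h w ∈ U₀ ⊔ W' := by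
    intro h w hw
    obtain ⟨a, ha, b, hb, rfl⟩ := Submodule.mem_sup.mp hw
    rw [map_add]
    by_cases hh : h ∈ M
    · exact Submodule.add_mem _ (Submodule.mem_sup_left (hU₀.2 h hh a ha))
        (Submodule.mem_sup_right (hW'inv h hh b hb))
    · have hhg : h * g⁻¹ ∈ M := by
        rw [key]; exact ⟨fun h' => absurd h' hh, fun h' => absurd h' hginv⟩
      have ha' : ρ h a ∈ W' := by
        have hga : ρ g a ∈ W' := ⟨a, ha, rfl⟩
        have := hW'inv _ hhg _ hga
        rwa [aux_comp, inv_mul_cancel_right] at this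
      obtain ⟨b', hb', rfl⟩ := hb
      have hhb : ρ h (ρ g b') ∈ U₀ := by
        rw [aux_comp]
        exact hU₀.2 _ (by rw [key]; exact ⟨fun h' => absurd h' hh, fun h' => absurd h' hg⟩)
          b' hb'
      exact Submodule.add_mem _ (Submodule.mem_sup_right ha') (Submodule.mem_sup_left hhb)
  have hsup : U₀ ⊔ W' = ⊤ := by
    rcases hirr _ hsupinv with h | h
    · exact absurd (le_bot_iff.mp (h ▸ le_sup_left : U₀ ≤ ⊥)) hU₀.1
    · exact h
  -- U₀ = ⊤
  have hU₀top : U₀ = ⊤ := by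
    by_cases hD : U₀ ⊓ W' = ⊥
    · exfalso
      have hdim := Submodule.finrank_sup_add_finrank_inf_eq U₀ W'
      rw [hsup, hD, finrank_top, finrank_bot, add_zero, hrank'] at hdim
      have : Even (Module.finrank ℂ V) := ⟨Module.finrank ℂ U₀, hdim⟩
      exact (Nat.not_even_iff_odd.mpr hodd) this
    · have hDinv : ∀ m ∈ M, ∀ w ∈ U₀ ⊓ W', ρ m w ∈ U₀ ⊓ W' := fun m hm w hw =>
        ⟨hU₀.2 m hm w hw.1, hW'inv m hm w hw.2⟩
      have hPD : P (U₀ ⊓ W') := ⟨hD, hDinv⟩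
      have h1 : Module.finrank ℂ (U₀ ⊓ W' : Submodule ℂ V) = Module.finrank ℂ U₀ :=
        le_antisymm (Submodule.finrank_mono inf_le_left) (hmin _ hPD)
      have hDeq : U₀ ⊓ W' = U₀ := Submodule.eq_of_le_of_finrank_eq inf_le_left h1
      have hle : U₀ ≤ W' := hDeq ▸ inf_le_right
      have hUW : U₀ = W' :=
        Submodule.eq_of_le_of_finrank_eq hle (hrank'.symm ▸ rfl)
      -- U₀ is G-invariant
      have hGinv : ∀ h : G, ∀ w ∈ U₀, ρ h w ∈ U₀ := by
        intro h w hw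
        by_cases hh : h ∈ M
        · exact hU₀.2 h hh w hw
        · have hhg : h * g⁻¹ ∈ M := by
            rw [key]; exact ⟨fun h' => absurd h' hh, fun h' => absurd h' hginv⟩
          have hga : ρ g w ∈ U₀ := hUW ▸ ⟨w, hw, rfl⟩
          have := hU₀.2 _ hhg _ hga
          rwa [aux_comp, inv_mul_cancel_right] at this
      rcases hirr U₀ hGinv with h | h
      · exact absurd h hU₀.1
      · exact h
  -- conclude
  intro W hWinv
  by_cases hbot : W = ⊥
  · exact Or.inl hbot
  · right
    have hPW : P W := ⟨hbot, hWinv⟩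
    have h1 : Module.finrank ℂ U₀ ≤ Module.finrank ℂ W := hmin W hPW
    rw [hU₀top, finrank_top] at h1
    exact Submodule.eq_top_of_finrank_eq (le_antisymm (Submodule.finrank_le W) h1)

end Step2

private theorem aux_induct : ∀ (k : ℕ) {G : Type*} [Group G] [Finite G]
    (N : Subgroup G) [N.Normal]
    {V : Type*} [AddCommGroup V] [Module ℂ V] [FiniteDimensional ℂ V]
    (ρ : Representation ℂ G V), N.index = 2 ^ k → Nontrivial V →
    (∀ W : Submodule ℂ V, (∀ h : G, ∀ w ∈ W, ρ h w ∈ W) → W = ⊥ ∨ W = ⊤) →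
    Odd (Module.finrank ℂ V) →
    ∀ W : Submodule ℂ V, (∀ n ∈ N, ∀ w ∈ W, ρ n w ∈ W) → W = ⊥ ∨ W = ⊤ := by
  intro k
  induction k with
  | zero =>
    intro G _ _ N _ V _ _ _ ρ hidx hnt hirr hodd W hW
    have hN : N = ⊤ := Subgroup.index_eq_one.mp (by simpa using hidx)
    exact hirr W fun h w hw => hW h (hN ▸ Subgroup.mem_top h) w hw
  | succ k ih =>
    intro G _ _ N _ V _ _ _ ρ hidx hnt hirr hodd
    haveI : Fact (Nat.Prime 2) := ⟨Nat.prime_two⟩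
    have hcard : Nat.card (G ⧸ N) = 2 ^ (k + 1) := hidx
    obtain ⟨K, hK⟩ := Sylow.exists_subgroup_card_pow_prime (G := G ⧸ N) 2 (n := k)
      (by rw [hcard]; exact pow_dvd_pow 2 (Nat.le_succ k))
    set M : Subgroup G := K.comap (QuotientGroup.mk' N) with hMdef
    have hNM : N ≤ M := fun x hx => by
      have h1 : QuotientGroup.mk' N x = 1 := (QuotientGroup.eq_one_iff x).mpr hx
      show QuotientGroup.mk' N x ∈ K
      rw [h1]; exact K.one_mem
    have hKidx : K.index = 2 := by
      have h1 := Subgroup.card_mul_index K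
      rw [hK, hcard, pow_succ] at h1
      have h2 : (2 : ℕ) ^ k ≠ 0 := pow_ne_zero _ two_ne_zero
      exact Nat.eq_of_mul_eq_mul_left (Nat.pos_of_ne_zero h2) h1
    have hMidx : M.index = 2 := by
      rw [hMdef, Subgroup.index_comap_of_surjective K (QuotientGroup.mk'_surjective N)]
      exact hKidx
    have hMirr := aux_step2 ρ M hMidx hnt hirr hodd
    have hidx' : (N.subgroupOf M).index = 2 ^ k := by
      have h1 : N.relIndex M * M.index = N.index := Subgroup.relIndex_mul_index hNM
      rw [hMidx, hidx, pow_succ] at h1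
      exact Nat.eq_of_mul_eq_mul_right two_pos h1
    intro W hW
    have hMirr' : ∀ W : Submodule ℂ V,
        (∀ h : ↥M, ∀ w ∈ W, (ρ.comp M.subtype) h w ∈ W) → W = ⊥ ∨ W = ⊤ :=
      fun W hW => hMirr W fun m hm w hw => hW ⟨m, hm⟩ w hw
    refine ih (N.subgroupOf M) (ρ.comp M.subtype) hidx' hnt hMirr' hodd W ?_
    intro n hn w hw
    exact hW (↑n : G) ((Subgroup.mem_subgroupOf).mp hn) w hw

/-- Let `G` be a finite group and `N` a normal subgroup of `2`-power index. The
restriction to `N` of any irreducible complex representation of `G` of odd dimension is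
irreducible. Irreducibility of a representation `ρ` is expressed as simplicity of the
associated module over the monoid algebra. -/
theorem stmt8 {G : Type*} [Group G] [Fintype G] (N : Subgroup G) [N.Normal]
    (hidx : ∃ k : ℕ, N.index = 2 ^ k)
    {V : Type*} [AddCommGroup V] [Module ℂ V] [FiniteDimensional ℂ V]
    (ρ : Representation ℂ G V)
    (hirr : IsSimpleModule (MonoidAlgebra ℂ G) ρ.asModule)
    (hodd : Odd (Module.finrank ℂ V)) :
    IsSimpleModule (MonoidAlgebra ℂ ↥N)
      (Representation.asModule (ρ.comp N.subtype : Representation ℂ ↥N V)) := by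
  obtain ⟨k, hk⟩ := hidx
  rw [aux_simple_iff] at hirr ⊢
  obtain ⟨hnt, hirr⟩ := hirr
  refine ⟨hnt, fun W hW => ?_⟩
  refine aux_induct k N ρ hk hnt hirr hodd W ?_
  intro n hn w hw
  exact hW ⟨n, hn⟩ w hw
end
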